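/- For every positive real number c there exists a control pair (λ, k) such that the following holds. Let ℰ be a coarse structure, A a unital ℰ-filtered C*-algebra, E ∈ ℰ, and (Δ₁, Δ₂, A_{Δ₁}, A_{Δ₂}) an E-controlled Mayer-Vietoris pair for A with coercivity c. Let E' ∈ ℰ with E' + E' ≤ E, let ε ∈ (0, 1/(4λ³)), let n and m be positive integers, let u be an ε-E'-unitary in M_n(A), let v be an ε-E'-unitary in M_m(A), and let w₁, w₂ be ε-E'-unitaries in M_{n+m}(A) such that wᵢ − I_{n+m} has all entries in A_{Δᵢ} for i = 1, 2 and ‖diag(u, v) − w₁w₂‖ < ε. Then there exists a λε-(k_ε E')-projection q in M_{n+m}(A) such that: (i) q − diag(I_n, 0) has all entries in A_{Δ₁} ∩ A_{Δ₂}; (ii) ‖q − w₁* diag(I_n, 0) w₁‖ < λε; and (iii) ‖q − w₂ diag(I_n, 0) w₂*‖ < λε. -/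

import Mathlib

set_option linter.unusedSectionVars false
set_option maxHeartbeats 2000000



universe u v

/-- The (unique) C*-norm of a square matrix over a C*-algebra `A`: the operator norm of
the matrix acting on the Hilbert `A`-module `Aⁿ`. -/
noncomputable def matCNorm {A : Type*} [CStarAlgebra A] {n : ℕ}
    (x : Matrix (Fin n) (Fin n) A) : ℝ :=
  sSup {t : ℝ | ∃ v : Fin n → A, ‖∑ j, star (v j) * v j‖ ≤ 1 ∧
    t = Real.sqrt ‖∑ j, star (x.mulVec v j) * x.mulVec v j‖}

/-- An `ℰ`-filtered (unital) C*-algebra structure on `A`: a family of closed linear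
subspaces `F E`, monotone in `E`, stable under the involution, satisfying
`F E * F E' ⊆ F (E + E')`, with dense union, and with `1 ∈ F E` for all `E`. -/
structure CoarseFiltration (ℰ : Type*) [AddCommSemigroup ℰ] [Lattice ℰ]
    (A : Type*) [CStarAlgebra A] where
  F : ℰ → Submodule ℂ A
  closed : ∀ E, IsClosed (F E : Set A)
  mono : ∀ ⦃E E' : ℰ⦄, E ≤ E' → F E ≤ F E'
  star_mem : ∀ E : ℰ, ∀ a ∈ F E, star a ∈ F E
  mul_mem : ∀ E E' : ℰ, ∀ a b : A, a ∈ F E → b ∈ F E' → a * b ∈ F (E + E')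
  dense_union : Dense (⋃ E : ℰ, (F E : Set A))
  one_mem : ∀ E : ℰ, (1 : A) ∈ F E

/-- `posSMul m E` is the `m`-fold sum `E + ⋯ + E` (only used for `m ≥ 1`). -/
def posSMul {ℰ : Type*} [AddCommSemigroup ℰ] : ℕ → ℰ → ℰ
  | 0, E => E
  | 1, E => E
  | (n + 2), E => posSMul (n + 1) E + E

/-- An `ε`-`E`-unitary in a matrix algebra over a filtered C*-algebra: all entries have
propagation `E`, and `‖w*w − 1‖ < ε`, `‖ww* − 1‖ < ε` for the C*-norm. -/
def IsQUnitary {ℰ : Type*} [AddCommSemigroup ℰ] [Lattice ℰ]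
    {A : Type*} [CStarAlgebra A] (Φ : CoarseFiltration ℰ A) (ε : ℝ) (E : ℰ)
    {n : ℕ} (w : Matrix (Fin n) (Fin n) A) : Prop :=
  (∀ i j, w i j ∈ Φ.F E) ∧
    matCNorm (star w * w - 1) < ε ∧ matCNorm (w * star w - 1) < ε

/-- An `E`-controlled Mayer-Vietoris pair `(Δ₁, Δ₂, B₁, B₂)` for a filtered C*-algebra
`A` with coercivity `c`: a completely coercive decomposition pair `(Δ₁, Δ₂)` of order `E`
with coercivity `c`, `E`-controlled `Δᵢ`-neighborhood C*-subalgebras `Bᵢ`, and the CIA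
property with coercivity `c` for `(B₁ ∩ A_{E'}, B₂ ∩ A_{E'})` for every `E'`. -/
structure MVPair {ℰ : Type*} [AddCommSemigroup ℰ] [Lattice ℰ]
    {A : Type*} [CStarAlgebra A] (Φ : CoarseFiltration ℰ A) (E : ℰ) (c : ℝ) where
  Δ₁ : Submodule ℂ A
  Δ₂ : Submodule ℂ A
  closedΔ₁ : IsClosed (Δ₁ : Set A)
  closedΔ₂ : IsClosed (Δ₂ : Set A)
  Δ₁_le : Δ₁ ≤ Φ.F E
  Δ₂_le : Δ₂ ≤ Φ.F E
  decomp : ∀ E' : ℰ, E' ≤ E → ∀ n : ℕ, ∀ x : Matrix (Fin n) (Fin n) A,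
    (∀ i j, x i j ∈ Φ.F E') →
    ∃ x₁ x₂ : Matrix (Fin n) (Fin n) A,
      (∀ i j, x₁ i j ∈ Δ₁ ∧ x₁ i j ∈ Φ.F E') ∧
      (∀ i j, x₂ i j ∈ Δ₂ ∧ x₂ i j ∈ Φ.F E') ∧
      matCNorm x₁ ≤ c * matCNorm x ∧ matCNorm x₂ ≤ c * matCNorm x ∧ x = x₁ + x₂
  B₁ : NonUnitalStarSubalgebra ℂ A
  B₂ : NonUnitalStarSubalgebra ℂ A
  closedB₁ : IsClosed (B₁ : Set A)
  closedB₂ : IsClosed (B₂ : Set A)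
  denseB₁ : (B₁ : Set A) ⊆ closure (⋃ E' : ℰ, ((B₁ : Set A) ∩ (Φ.F E' : Set A)))
  denseB₂ : (B₂ : Set A) ⊆ closure (⋃ E' : ℰ, ((B₂ : Set A) ∩ (Φ.F E' : Set A)))
  nbhd₁ : ∀ d₁ d₂ d₃ d₄ : A, d₁ ∈ Δ₁ → d₂ ∈ Δ₁ → d₃ ∈ Δ₁ → d₄ ∈ Δ₁ →
    ∀ a b a' b' : A, a ∈ Φ.F (E + E + E + E + E) → b ∈ Φ.F (E + E + E + E + E) →
      a' ∈ Φ.F (E + E + E + E + E) → b' ∈ Φ.F (E + E + E + E + E) →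
      d₁ + a * d₂ + d₃ * b + a' * d₄ * b' ∈ B₁
  nbhd₂ : ∀ d₁ d₂ d₃ d₄ : A, d₁ ∈ Δ₂ → d₂ ∈ Δ₂ → d₃ ∈ Δ₂ → d₄ ∈ Δ₂ →
    ∀ a b a' b' : A, a ∈ Φ.F (E + E + E + E + E) → b ∈ Φ.F (E + E + E + E + E) →
      a' ∈ Φ.F (E + E + E + E + E) → b' ∈ Φ.F (E + E + E + E + E) →
      d₁ + a * d₂ + d₃ * b + a' * d₄ * b' ∈ B₂
  cia : ∀ E' : ℰ, ∀ δ : ℝ, 0 < δ → ∀ n : ℕ, ∀ x y : Matrix (Fin n) (Fin n) A,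
    (∀ i j, x i j ∈ B₁ ∧ x i j ∈ Φ.F E') →
    (∀ i j, y i j ∈ B₂ ∧ y i j ∈ Φ.F E') →
    matCNorm (x - y) < δ →
    ∃ z : Matrix (Fin n) (Fin n) A,
      (∀ i j, z i j ∈ B₁ ∧ z i j ∈ B₂ ∧ z i j ∈ Φ.F E') ∧
      matCNorm (z - x) < c * δ ∧ matCNorm (z - y) < c * δ


/-- An `ε`-`E`-projection in a matrix algebra over a filtered C*-algebra: all entries
have propagation `E`, `p* = p` and `‖p² − p‖ < ε` for the C*-norm. -/
def IsQProjection {ℰ : Type*} [AddCommSemigroup ℰ] [Lattice ℰ]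
    {A : Type*} [CStarAlgebra A] (Φ : CoarseFiltration ℰ A) (ε : ℝ) (E : ℰ)
    {n : ℕ} (p : Matrix (Fin n) (Fin n) A) : Prop :=
  (∀ i j, p i j ∈ Φ.F E) ∧ star p = p ∧ matCNorm (p * p - p) < ε

/-- The block-diagonal matrix `diag(u, v)`. -/
def dsum {A : Type*} [Zero A] {n m : ℕ} (u : Matrix (Fin n) (Fin n) A)
    (v : Matrix (Fin m) (Fin m) A) : Matrix (Fin (n + m)) (Fin (n + m)) A :=
  Matrix.reindex finSumFinEquiv finSumFinEquiv (Matrix.fromBlocks u 0 0 v)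

/-- The diagonal matrix `diag(I_n, 0)` of size `N`. -/
def diagOne (A : Type*) [Zero A] [One A] (n N : ℕ) : Matrix (Fin N) (Fin N) A :=
  Matrix.diagonal fun i => if (i : ℕ) < n then 1 else 0

open scoped InnerProductSpace

section Aux

variable {A : Type*} [CStarAlgebra A] [PartialOrder A] [StarOrderedRing A]

/-- `Fin N → A` as a C⋆-module. -/
noncomputable def toV {N : ℕ} (v : Fin N → A) : WithCStarModule A (Fin N → A) :=
  (WithCStarModule.equiv A _).symm (star v)

lemma inner_toV {N : ℕ} (v w : Fin N → A) :
    ⟪toV w, toV v⟫_A = ∑ j, star (v j) * w j := by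
  simp [toV, WithCStarModule.pi_inner, WithCStarModule.equiv_symm_pi_apply,
    WithCStarModule.inner_def]

lemma norm_toV {N : ℕ} (v : Fin N → A) :
    ‖toV v‖ = Real.sqrt ‖∑ j, star (v j) * v j‖ := by
  rw [CStarModule.norm_eq_sqrt_norm_inner_self (A := A), inner_toV]

lemma matCNorm_eq' {N : ℕ} (x : Matrix (Fin N) (Fin N) A) :
    matCNorm x = sSup {t : ℝ | ∃ v : Fin N → A, ‖toV v‖ ≤ 1 ∧ t = ‖toV (x.mulVec v)‖} := by
  unfold matCNorm
  congr 1
  ext t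
  constructor
  · rintro ⟨v, hv, rfl⟩
    refine ⟨v, ?_, (norm_toV _).symm⟩
    rw [norm_toV]
    exact Real.sqrt_le_one.mpr hv
  · rintro ⟨v, hv, rfl⟩
    refine ⟨v, ?_, norm_toV _⟩
    rw [norm_toV] at hv
    exact Real.sqrt_le_one.mp hv

lemma toV_apply {N : ℕ} (v : Fin N → A) (i : Fin N) : toV v i = star (v i) :=
  WithCStarModule.equiv_symm_pi_apply _ i

lemma norm_entry_le_norm_toV {N : ℕ} (v : Fin N → A) (i : Fin N) : ‖v i‖ ≤ ‖toV v‖ := by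
  simpa [toV_apply] using WithCStarModule.norm_apply_le_norm (toV v) i

lemma matCNorm_bddAbove {N : ℕ} (x : Matrix (Fin N) (Fin N) A) :
    BddAbove {t : ℝ | ∃ v : Fin N → A, ‖toV v‖ ≤ 1 ∧ t = ‖toV (x.mulVec v)‖} := by
  refine ⟨∑ j, ∑ k, ‖x j k‖, ?_⟩
  rintro t ⟨v, hv, rfl⟩
  calc ‖toV (x.mulVec v)‖ ≤ ∑ j, ‖toV (x.mulVec v) j‖ :=
        WithCStarModule.pi_norm_le_sum_norm _
    _ ≤ ∑ j, ∑ k, ‖x j k‖ := by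
        refine Finset.sum_le_sum fun j _ => ?_
        rw [toV_apply, norm_star]
        calc ‖x.mulVec v j‖ ≤ ∑ k, ‖x j k * v k‖ := by
              rw [Matrix.mulVec, dotProduct]
              exact norm_sum_le _ _
          _ ≤ ∑ k, ‖x j k‖ := by
              refine Finset.sum_le_sum fun k _ => ?_
              calc ‖x j k * v k‖ ≤ ‖x j k‖ * ‖v k‖ := norm_mul_le _ _
                _ ≤ ‖x j k‖ * 1 := by
                    have := (norm_entry_le_norm_toV v k).trans hv
                    exact mul_le_mul_of_nonneg_left this (norm_nonneg _)
                _ = ‖x j k‖ := mul_one _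

lemma le_matCNorm {N : ℕ} (x : Matrix (Fin N) (Fin N) A) {v : Fin N → A}
    (hv : ‖toV v‖ ≤ 1) : ‖toV (x.mulVec v)‖ ≤ matCNorm x := by
  rw [matCNorm_eq']
  exact le_csSup (matCNorm_bddAbove x) ⟨v, hv, rfl⟩

lemma matCNorm_le {N : ℕ} (x : Matrix (Fin N) (Fin N) A) {C : ℝ} (hC : 0 ≤ C)
    (h : ∀ v : Fin N → A, ‖toV v‖ ≤ 1 → ‖toV (x.mulVec v)‖ ≤ C) : matCNorm x ≤ C := by
  rw [matCNorm_eq']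
  exact Real.sSup_le (by rintro t ⟨v, hv, rfl⟩; exact h v hv) hC

lemma matCNorm_nonneg {N : ℕ} (x : Matrix (Fin N) (Fin N) A) : 0 ≤ matCNorm x := by
  have h0 : ‖toV (0 : Fin N → A)‖ ≤ 1 := by
    rw [show toV (0 : Fin N → A) = 0 by simp [toV]]
    simp
  have := le_matCNorm x h0
  exact le_trans (norm_nonneg _) (by rwa [Matrix.mulVec_zero] at this)

end Aux

section Aux2

variable {A : Type*} [CStarAlgebra A] [PartialOrder A] [StarOrderedRing A] {N : ℕ}

lemma toV_add (v w : Fin N → A) : toV (v + w) = toV v + toV w := by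
  simp only [toV, star_add]; exact WithCStarModule.equiv_symm_add _ _

lemma toV_neg (v : Fin N → A) : toV (-v) = -toV v := by
  simp only [toV, star_neg]; exact WithCStarModule.equiv_symm_neg _

lemma toV_smul (c : ℂ) (v : Fin N → A) : toV (c • v) = star c • toV v := by
  simp only [toV, star_smul]; exact WithCStarModule.equiv_symm_smul _ _

lemma matCNorm_add_le (x y : Matrix (Fin N) (Fin N) A) :
    matCNorm (x + y) ≤ matCNorm x + matCNorm y := by
  refine matCNorm_le _ (add_nonneg (matCNorm_nonneg x) (matCNorm_nonneg y)) fun v hv => ?_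
  rw [Matrix.add_mulVec, toV_add]
  exact (norm_add_le _ _).trans (add_le_add (le_matCNorm x hv) (le_matCNorm y hv))

lemma matCNorm_neg (x : Matrix (Fin N) (Fin N) A) : matCNorm (-x) = matCNorm x := by
  have key : ∀ z : Matrix (Fin N) (Fin N) A, matCNorm (-z) ≤ matCNorm z := fun z => by
    refine matCNorm_le _ (matCNorm_nonneg z) fun v hv => ?_
    rw [Matrix.neg_mulVec, toV_neg, norm_neg]
    exact le_matCNorm z hv
  refine le_antisymm (key x) ?_
  simpa using key (-x)

lemma matCNorm_sub_le (x y : Matrix (Fin N) (Fin N) A) :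
    matCNorm (x - y) ≤ matCNorm x + matCNorm y := by
  rw [sub_eq_add_neg]
  exact (matCNorm_add_le x (-y)).trans (by rw [matCNorm_neg])

lemma matCNorm_smul_le (c : ℂ) (x : Matrix (Fin N) (Fin N) A) :
    matCNorm (c • x) ≤ ‖c‖ * matCNorm x := by
  refine matCNorm_le _ (mul_nonneg (norm_nonneg _) (matCNorm_nonneg x)) fun v hv => ?_
  rw [Matrix.smul_mulVec, toV_smul, norm_smul (star c) (toV (x.mulVec v)), norm_star]
  exact mul_le_mul_of_nonneg_left (le_matCNorm x hv) (norm_nonneg _)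

lemma norm_mulVec_le (x : Matrix (Fin N) (Fin N) A) (v : Fin N → A) :
    ‖toV (x.mulVec v)‖ ≤ matCNorm x * ‖toV v‖ := by
  rcases eq_or_ne v 0 with rfl | hv
  · rw [Matrix.mulVec_zero]
    rw [show toV (0 : Fin N → A) = 0 by simp [toV]]
    simp
  · have hv0 : toV v ≠ 0 := fun h => hv (star_eq_zero.mp h)
    set r : ℝ := ‖toV v‖ with hr
    have hrpos : 0 < r := norm_pos_iff.mpr hv0
    set u : Fin N → A := ((r:ℂ))⁻¹ • v with hu
    have hu1 : ‖toV u‖ = 1 := by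
      rw [hu, toV_smul, norm_smul (star ((r:ℂ))⁻¹) (toV v), norm_star, ← hr]
      simp [hrpos.ne', abs_of_pos hrpos]
    have h1 : ‖toV (x.mulVec u)‖ ≤ matCNorm x := le_matCNorm x hu1.le
    rw [hu, Matrix.mulVec_smul, toV_smul, norm_smul (star ((r:ℂ))⁻¹) (toV (x.mulVec v)), norm_star] at h1
    have : ‖((r:ℂ))⁻¹‖ = r⁻¹ := by
      simp [abs_of_pos hrpos]
    rw [this] at h1
    calc ‖toV (x.mulVec v)‖ = r * (r⁻¹ * ‖toV (x.mulVec v)‖) := by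
          field_simp
      _ ≤ r * matCNorm x := mul_le_mul_of_nonneg_left h1 hrpos.le
      _ = matCNorm x * r := mul_comm _ _

lemma matCNorm_mul_le (x y : Matrix (Fin N) (Fin N) A) :
    matCNorm (x * y) ≤ matCNorm x * matCNorm y := by
  refine matCNorm_le _ (mul_nonneg (matCNorm_nonneg x) (matCNorm_nonneg y)) fun v hv => ?_
  rw [← Matrix.mulVec_mulVec]
  calc ‖toV (x.mulVec (y.mulVec v))‖ ≤ matCNorm x * ‖toV (y.mulVec v)‖ := norm_mulVec_le _ _
    _ ≤ matCNorm x * matCNorm y :=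
        mul_le_mul_of_nonneg_left (le_matCNorm y hv) (matCNorm_nonneg x)

lemma matCNorm_one_le : matCNorm (1 : Matrix (Fin N) (Fin N) A) ≤ 1 := by
  refine matCNorm_le _ zero_le_one fun v hv => ?_
  rwa [Matrix.one_mulVec]

lemma inner_conjTranspose_mulVec (x : Matrix (Fin N) (Fin N) A) (v w : Fin N → A) :
    ⟪toV (x.conjTranspose.mulVec v), toV w⟫_A = ⟪toV v, toV (x.mulVec w)⟫_A := by
  rw [inner_toV, inner_toV]
  simp only [Matrix.mulVec, dotProduct, Matrix.conjTranspose_apply,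
    star_sum, star_mul, star_star, Finset.sum_mul, Finset.mul_sum]
  rw [Finset.sum_comm]
  refine Finset.sum_congr rfl fun k _ => Finset.sum_congr rfl fun j _ => ?_
  rw [mul_assoc]

lemma matCNorm_conjTranspose (x : Matrix (Fin N) (Fin N) A) :
    matCNorm x.conjTranspose = matCNorm x := by
  have key : ∀ z : Matrix (Fin N) (Fin N) A, matCNorm z.conjTranspose ≤ matCNorm z := by
    intro z
    refine matCNorm_le _ (matCNorm_nonneg z) fun v hv => ?_
    set a : ℝ := ‖toV (z.conjTranspose.mulVec v)‖ with ha
    have hsq : a ^ 2 ≤ matCNorm z * a := by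
      calc a ^ 2 = ‖⟪toV (z.conjTranspose.mulVec v), toV (z.conjTranspose.mulVec v)⟫_A‖ :=
            CStarModule.norm_sq_eq (A := A)
        _ = ‖⟪toV v, toV (z.mulVec (z.conjTranspose.mulVec v))⟫_A‖ := by
            rw [inner_conjTranspose_mulVec]
        _ ≤ ‖toV v‖ * ‖toV (z.mulVec (z.conjTranspose.mulVec v))‖ :=
            CStarModule.norm_inner_le _
        _ ≤ 1 * (matCNorm z * a) := by
            exact mul_le_mul hv (norm_mulVec_le _ _) (norm_nonneg _) zero_le_one
        _ = matCNorm z * a := one_mul _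
    rcases eq_or_lt_of_le (norm_nonneg (toV (z.conjTranspose.mulVec v)) : (0:ℝ) ≤ a) with h0 | h0
    · rw [ha, ← h0]; exact matCNorm_nonneg z
    · nlinarith
  refine le_antisymm (key x) ?_
  simpa [Matrix.conjTranspose_conjTranspose] using key x.conjTranspose

lemma matCNorm_le_sqrt (x : Matrix (Fin N) (Fin N) A) :
    matCNorm x ≤ Real.sqrt (matCNorm (x.conjTranspose * x)) := by
  refine matCNorm_le _ (Real.sqrt_nonneg _) fun v hv => ?_
  set a : ℝ := ‖toV (x.mulVec v)‖ with ha
  have hsq : a ^ 2 ≤ matCNorm (x.conjTranspose * x) := by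
    calc a ^ 2 = ‖⟪toV (x.mulVec v), toV (x.mulVec v)⟫_A‖ := CStarModule.norm_sq_eq (A := A)
      _ = ‖⟪toV v, toV (x.conjTranspose.mulVec (x.mulVec v))⟫_A‖ := by
          conv_lhs => rw [show x = x.conjTranspose.conjTranspose from
            (Matrix.conjTranspose_conjTranspose x).symm]
          rw [inner_conjTranspose_mulVec]
          rw [Matrix.conjTranspose_conjTranspose]
      _ ≤ ‖toV v‖ * ‖toV (x.conjTranspose.mulVec (x.mulVec v))‖ := CStarModule.norm_inner_le _
      _ ≤ 1 * matCNorm (x.conjTranspose * x) := by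
          rw [Matrix.mulVec_mulVec]
          exact mul_le_mul hv (le_matCNorm _ hv) (norm_nonneg _) zero_le_one
      _ = matCNorm (x.conjTranspose * x) := one_mul _
  calc a = Real.sqrt (a ^ 2) := (Real.sqrt_sq (norm_nonneg _)).symm
    _ ≤ Real.sqrt (matCNorm (x.conjTranspose * x)) := Real.sqrt_le_sqrt hsq

lemma matCNorm_le_two {x : Matrix (Fin N) (Fin N) A}
    (h : matCNorm (x.conjTranspose * x - 1) ≤ 1) : matCNorm x ≤ 2 := by
  have h1 : matCNorm (x.conjTranspose * x) ≤ 2 := by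
    calc matCNorm (x.conjTranspose * x)
        = matCNorm ((x.conjTranspose * x - 1) + 1) := by rw [sub_add_cancel]
      _ ≤ matCNorm (x.conjTranspose * x - 1) + matCNorm (1 : Matrix (Fin N) (Fin N) A) :=
          matCNorm_add_le _ _
      _ ≤ 1 + 1 := add_le_add h matCNorm_one_le
      _ = 2 := by norm_num
  calc matCNorm x ≤ Real.sqrt (matCNorm (x.conjTranspose * x)) := matCNorm_le_sqrt x
    _ ≤ Real.sqrt 4 := Real.sqrt_le_sqrt (by linarith)
    _ = 2 := by
        rw [show (4:ℝ) = 2 ^ 2 by norm_num, Real.sqrt_sq (by norm_num)]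

end Aux2


section Aux3

variable {A : Type*} [CStarAlgebra A] [PartialOrder A] [StarOrderedRing A] {N n m : ℕ}

lemma diagOne_fun_eq_star :
    (star fun i : Fin N => if (i : ℕ) < n then (1:A) else 0)
      = fun i : Fin N => if (i : ℕ) < n then (1:A) else 0 := by
  funext i
  by_cases h : (i:ℕ) < n <;> simp [h, Pi.star_apply]

lemma diagOne_conjTranspose : (diagOne A n N).conjTranspose = diagOne A n N := by
  rw [diagOne, Matrix.diagonal_conjTranspose, diagOne_fun_eq_star]

lemma diagOne_mul_diagOne : diagOne A n N * diagOne A n N = diagOne A n N := by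
  rw [diagOne, Matrix.diagonal_mul_diagonal]
  refine congrArg Matrix.diagonal (funext fun i => ?_)
  by_cases h : (i:ℕ) < n <;> simp [h]

lemma matCNorm_diagOne_le : matCNorm (diagOne A n N) ≤ 1 := by
  refine matCNorm_le _ zero_le_one fun v hv => ?_
  have hmv : ∀ j, (diagOne A n N).mulVec v j = if (j:ℕ) < n then v j else 0 := by
    intro j
    rw [diagOne]
    rw [show (Matrix.diagonal fun i : Fin N => if (i : ℕ) < n then (1:A) else 0).mulVec v j
      = (if (j : ℕ) < n then (1:A) else 0) * v j from Matrix.mulVec_diagonal _ _ _]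
    by_cases h : (j:ℕ) < n <;> simp [h]
  rw [norm_toV]
  refine Real.sqrt_le_one.mpr ?_
  have hle : ∑ j, star ((diagOne A n N).mulVec v j) * (diagOne A n N).mulVec v j
      ≤ ∑ j, star (v j) * v j := by
    refine Finset.sum_le_sum fun j _ => ?_
    rw [hmv j]
    by_cases h : (j:ℕ) < n
    · simp [h]
    · simp only [h, if_false, star_zero, zero_mul]
      exact star_mul_self_nonneg (v j)
  have hnn : (0:A) ≤ ∑ j, star ((diagOne A n N).mulVec v j) * (diagOne A n N).mulVec v j :=
    Finset.sum_nonneg fun j _ => star_mul_self_nonneg _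
  calc ‖∑ j, star ((diagOne A n N).mulVec v j) * (diagOne A n N).mulVec v j‖
      ≤ ‖∑ j, star (v j) * v j‖ := CStarAlgebra.norm_le_norm_of_nonneg_of_le hnn hle
    _ ≤ 1 := by
        rw [norm_toV] at hv
        exact Real.sqrt_le_one.mp hv

lemma diagOne_mul_dsum_comm (u : Matrix (Fin n) (Fin n) A) (v : Matrix (Fin m) (Fin m) A) :
    diagOne A n (n + m) * dsum u v = dsum u v * diagOne A n (n + m) := by
  ext i j
  obtain ⟨s, rfl⟩ : ∃ s, i = finSumFinEquiv s := ⟨finSumFinEquiv.symm i, by simp⟩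
  obtain ⟨t, rfl⟩ : ∃ t, j = finSumFinEquiv t := ⟨finSumFinEquiv.symm j, by simp⟩
  have hD : ∀ s t, dsum u v (finSumFinEquiv s) (finSumFinEquiv t)
      = Matrix.fromBlocks u 0 0 v s t := by
    intro s t
    simp [dsum, Matrix.reindex_apply]
  rw [diagOne, Matrix.diagonal_mul, Matrix.mul_diagonal, hD]
  have hl : ∀ i' : Fin n, ((finSumFinEquiv (Sum.inl i') : Fin (n+m)) : ℕ) < n := by
    intro i'
    simp [finSumFinEquiv_apply_left]
  have hr : ∀ j' : Fin m, ¬ ((finSumFinEquiv (Sum.inr j') : Fin (n+m)) : ℕ) < n := by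
    intro j'
    simp [finSumFinEquiv_apply_right]
  rcases s with i' | i' <;> rcases t with j' | j'
  · simp [hl]
  · simp [hl i', hr j']
  · simp [hl j', hr i']
  · simp [hr]

end Aux3


section Aux4

variable {ℰ : Type*} [AddCommSemigroup ℰ] [Lattice ℰ]
variable {A : Type*} [CStarAlgebra A] (Φ : CoarseFiltration ℰ A)
variable {N n : ℕ}

lemma entry_mul_F {E₁ E₂ : ℰ} {M P : Matrix (Fin N) (Fin N) A}
    (hM : ∀ i j, M i j ∈ Φ.F E₁) (hP : ∀ i j, P i j ∈ Φ.F E₂) :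
    ∀ i j, (M * P) i j ∈ Φ.F (E₁ + E₂) := by
  intro i j
  rw [Matrix.mul_apply]
  exact Submodule.sum_mem _ fun k _ => Φ.mul_mem _ _ _ _ (hM i k) (hP k j)

lemma entry_conjTranspose_F {E : ℰ} {M : Matrix (Fin N) (Fin N) A}
    (hM : ∀ i j, M i j ∈ Φ.F E) : ∀ i j, M.conjTranspose i j ∈ Φ.F E := fun i j =>
  Φ.star_mem _ _ (hM j i)

lemma entry_diagOne_F (E : ℰ) : ∀ i j, (diagOne A n N) i j ∈ Φ.F E := by
  intro i j
  rw [diagOne, Matrix.diagonal_apply]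
  split_ifs with h1 h2
  · exact Φ.one_mem E
  · exact Submodule.zero_mem _
  · exact Submodule.zero_mem _

variable {B : NonUnitalStarSubalgebra ℂ A}

lemma entry_mul_B {M P : Matrix (Fin N) (Fin N) A}
    (hM : ∀ i j, M i j ∈ B) (hP : ∀ i j, P i j ∈ B) :
    ∀ i j, (M * P) i j ∈ B := by
  intro i j
  rw [Matrix.mul_apply]
  exact sum_mem fun k _ => mul_mem (hM i k) (hP k j)

lemma entry_mul_diagOne_B {M : Matrix (Fin N) (Fin N) A}
    (hM : ∀ i j, M i j ∈ B) : ∀ i j, (M * diagOne A n N) i j ∈ B := by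
  intro i j
  rw [diagOne, Matrix.mul_diagonal]
  split_ifs with h
  · rw [mul_one]; exact hM i j
  · rw [mul_zero]; exact zero_mem _

lemma entry_diagOne_mul_B {M : Matrix (Fin N) (Fin N) A}
    (hM : ∀ i j, M i j ∈ B) : ∀ i j, (diagOne A n N * M) i j ∈ B := by
  intro i j
  rw [diagOne, Matrix.diagonal_mul]
  split_ifs with h
  · rw [one_mul]; exact hM i j
  · rw [zero_mul]; exact zero_mem _

lemma entry_conjTranspose_B {M : Matrix (Fin N) (Fin N) A}
    (hM : ∀ i j, M i j ∈ B) : ∀ i j, M.conjTranspose i j ∈ B := fun i j =>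
  star_mem (hM j i)

end Aux4

section RingIds

variable {R : Type*} [Ring R]

lemma ring_id1 (a b P : R) :
    a * P * b - P = (a - 1) * P * (b - 1) + (a - 1) * P + P * (b - 1) := by
  noncomm_ring

lemma ring_id3 (a a' b b' D D' P : R) :
    (a' * P * a - P) - (b * P * b' - P)
      = a' * (P - D * P * D') * a
        + a' * ((D - a * b) * P * D' + (a * b) * P * (D' - b' * a')) * a
        + ((a' * a - 1) * (b * P * b') * (a' * a) + (b * P * b') * (a' * a - 1)) := by
  noncomm_ring

lemma ring_id4 (a a' b b' D D' : R) :
    D * D' - 1 = (D - a * b) * D' + (a * b) * (D' - b' * a')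
      + a * (b * b' - 1) * a' + (a * a' - 1) := by
  noncomm_ring

lemma ring_id5 {D D' P : R} (hcomm : P * D = D * P) :
    D * P * D' - P = P * (D * D' - 1) := by
  rw [show D * P = P * D from hcomm.symm, mul_assoc, mul_sub, mul_one]

lemma ring_id6 {a a' P : R} (hPP : P * P = P) :
    (a' * P * a) * (a' * P * a) - a' * P * a = a' * P * (a * a' - 1) * P * a := by
  have h : a' * P * (a * a' - 1) * P * a = (a' * P * a) * (a' * P * a) - a' * (P * P) * a := by
    noncomm_ring
  rw [h, hPP]

lemma ring_id7 (p q : R) :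
    q * q - q = (q - p) * q + p * (q - p) + (p * p - p) + (p - q) := by
  noncomm_ring

end RingIds


section Bounds

variable {A : Type*} [CStarAlgebra A] [PartialOrder A] [StarOrderedRing A] {N : ℕ}

lemma matCNorm_mul_bound {a b : Matrix (Fin N) (Fin N) A} {Ca Cb : ℝ}
    (ha : matCNorm a ≤ Ca) (hb : matCNorm b ≤ Cb) (hCa : 0 ≤ Ca) :
    matCNorm (a * b) ≤ Ca * Cb :=
  (matCNorm_mul_le a b).trans (mul_le_mul ha hb (matCNorm_nonneg b) hCa)

lemma matCNorm_add_bound {a b : Matrix (Fin N) (Fin N) A} {Ca Cb : ℝ}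
    (ha : matCNorm a ≤ Ca) (hb : matCNorm b ≤ Cb) :
    matCNorm (a + b) ≤ Ca + Cb :=
  (matCNorm_add_le a b).trans (add_le_add ha hb)

end Bounds

/-- For every `c > 0` there is a control pair `(λ, k)` such that,
given an `E`-controlled Mayer-Vietoris pair with coercivity `c` for a unital filtered
C*-algebra `A`, `E' ∈ ℰ` with `2E' ≤ E`, `0 < ε < 1/(4λ³)`, `ε`-`E'`-unitaries `u`, `v`
in `M_n(A)`, `M_m(A)` and `ε`-`E'`-unitaries `w₁, w₂` in `M_{n+m}(A)` with
`wᵢ − I ∈ M_{n+m}(A_{Δᵢ})` and `‖diag(u, v) − w₁w₂‖ < ε`, there is a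
`λε`-`(k_ε E')`-projection `q` in `M_{n+m}(A)` with `q − diag(I_n, 0)` having entries in
`A_{Δ₁} ∩ A_{Δ₂}`, `‖q − w₁* diag(I_n, 0) w₁‖ < λε` and `‖q − w₂ diag(I_n, 0) w₂*‖ < λε`. -/
theorem stmt_11 (c : ℝ) (hc : 0 < c) :
    ∃ (lam : ℝ) (k : ℝ → ℕ), 1 < lam ∧
      (∀ ε : ℝ, 0 < ε → ε < 1 / (4 * lam) → 0 < k ε) ∧
      (∀ ε ε' : ℝ, 0 < ε → ε ≤ ε' → ε' < 1 / (4 * lam) → k ε' ≤ k ε) ∧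
      ∀ (ℰ : Type u) [AddCommSemigroup ℰ] [Lattice ℰ]
        [CovariantClass ℰ ℰ (· + ·) (· ≤ ·)]
        [CovariantClass ℰ ℰ (Function.swap (· + ·)) (· ≤ ·)]
        (A : Type v) [CStarAlgebra A] (Φ : CoarseFiltration ℰ A) (E : ℰ)
        (mv : MVPair Φ E c) (E' : ℰ), E' + E' ≤ E →
        ∀ ε : ℝ, 0 < ε → ε < 1 / (4 * lam ^ 3) →
        ∀ n m : ℕ, 0 < n → 0 < m →
        ∀ u : Matrix (Fin n) (Fin n) A, IsQUnitary Φ ε E' u →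
        ∀ v : Matrix (Fin m) (Fin m) A, IsQUnitary Φ ε E' v →
        ∀ w₁ w₂ : Matrix (Fin (n + m)) (Fin (n + m)) A,
          IsQUnitary Φ ε E' w₁ → IsQUnitary Φ ε E' w₂ →
          (∀ i j, (w₁ - 1) i j ∈ mv.B₁) →
          (∀ i j, (w₂ - 1) i j ∈ mv.B₂) →
          matCNorm (dsum u v - w₁ * w₂) < ε →
          ∃ q : Matrix (Fin (n + m)) (Fin (n + m)) A,
            IsQProjection Φ (lam * ε) (posSMul (k ε) E') q ∧
            (∀ i j, (q - diagOne A n (n + m)) i j ∈ mv.B₁ ∧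
              (q - diagOne A n (n + m)) i j ∈ mv.B₂) ∧
            matCNorm (q - star w₁ * diagOne A n (n + m) * w₁) < lam * ε ∧
            matCNorm (q - w₂ * diagOne A n (n + m) * star w₂) < lam * ε := by
  refine ⟨1060 * c + 1060, fun _ => 3, (by nlinarith), (fun _ _ _ => by norm_num),
    (fun _ _ _ _ _ => le_refl 3), ?_⟩
  intro ℰ _ _ _ _ A _ Φ E mv E' hE' ε hε heplam n m hn hm u hu v hv w₁ w₂ hw₁ hw₂ hb₁ hb₂ hDW
  letI : PartialOrder A := CStarAlgebra.spectralOrder A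
  letI : StarOrderedRing A := CStarAlgebra.spectralOrderedRing A
  set lam : ℝ := 1060 * c + 1060 with hlam_def
  have hlam1 : (1:ℝ) < lam := by nlinarith
  have hlam0 : (0:ℝ) < lam := by linarith
  have hlam3 : lam ≤ lam ^ 3 := by nlinarith [mul_pos hlam0 hlam0, sq_nonneg (lam - 1)]
  have hε1 : ε < 1 := by
    have h4 : (1:ℝ) / (4 * lam ^ 3) < 1 := by
      rw [div_lt_one (by nlinarith)]
      nlinarith
    linarith
  have hlamε1 : lam * ε < 1 := by
    have : ε < 1 / (4 * lam) := lt_of_lt_of_le heplam (by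
      apply div_le_div_of_nonneg_left (by norm_num) (by nlinarith) (by nlinarith))
    calc lam * ε < lam * (1 / (4 * lam)) :=
          mul_lt_mul_of_pos_left this (by nlinarith)
      _ = 1 / 4 := by field_simp
      _ < 1 := by norm_num
  have h105 : 105 * c ≤ lam := by nlinarith
  -- convert star to conjTranspose
  simp only [Matrix.star_eq_conjTranspose]
  obtain ⟨hw₁e, hw₁a, hw₁b⟩ := hw₁
  obtain ⟨hw₂e, hw₂a, hw₂b⟩ := hw₂
  rw [Matrix.star_eq_conjTranspose] at hw₁a hw₁b hw₂a hw₂b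
  set P : Matrix (Fin (n+m)) (Fin (n+m)) A := diagOne A n (n + m) with hP_def
  set D : Matrix (Fin (n+m)) (Fin (n+m)) A := dsum u v with hD_def
  set W₁ : Matrix (Fin (n+m)) (Fin (n+m)) A := w₁.conjTranspose with hW₁_def
  set W₂ : Matrix (Fin (n+m)) (Fin (n+m)) A := w₂.conjTranspose with hW₂_def
  set Ds : Matrix (Fin (n+m)) (Fin (n+m)) A := D.conjTranspose with hDs_def
  -- basic norm bounds
  have hw₁n : matCNorm w₁ ≤ 2 := matCNorm_le_two (hw₁a.le.trans hε1.le)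
  have hw₂n : matCNorm w₂ ≤ 2 := matCNorm_le_two (hw₂a.le.trans hε1.le)
  have hw₁sn : matCNorm W₁ ≤ 2 := by
    refine matCNorm_le_two ?_
    rw [hW₁_def, Matrix.conjTranspose_conjTranspose]
    exact hw₁b.le.trans hε1.le
  have hw₂sn : matCNorm W₂ ≤ 2 := by
    refine matCNorm_le_two ?_
    rw [hW₂_def, Matrix.conjTranspose_conjTranspose]
    exact hw₂b.le.trans hε1.le
  have hPn : matCNorm P ≤ 1 := matCNorm_diagOne_le
  have hWn : matCNorm (w₁ * w₂) ≤ 4 := by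
    have := matCNorm_mul_bound hw₁n hw₂n (by norm_num)
    linarith
  have hDn : matCNorm D ≤ 5 := by
    have h : D = (D - w₁ * w₂) + w₁ * w₂ := by abel
    rw [h]
    have := matCNorm_add_bound hDW.le hWn
    linarith
  have hDsn : matCNorm Ds ≤ 5 := by rw [hDs_def, matCNorm_conjTranspose]; exact hDn
  have hDWs : matCNorm (Ds - W₂ * W₁) < ε := by
    rw [hDs_def, hW₁_def, hW₂_def, ← Matrix.conjTranspose_mul, ← Matrix.conjTranspose_sub,
      matCNorm_conjTranspose]
    exact hDW
  have hRn : matCNorm (w₂ * P * W₂) ≤ 4 := by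
    have h1 : matCNorm (w₂ * P) ≤ 2 * 1 := matCNorm_mul_bound hw₂n hPn (by norm_num)
    have := matCNorm_mul_bound h1 hw₂sn (by norm_num)
    linarith
  have haan : matCNorm (W₁ * w₁) ≤ 2 := by
    have h : W₁ * w₁ = (W₁ * w₁ - 1) + 1 := by abel
    rw [h]
    have h1 : matCNorm (1 : Matrix (Fin (n+m)) (Fin (n+m)) A) ≤ 1 := matCNorm_one_le
    have := matCNorm_add_bound hw₁a.le h1
    linarith
  have haan1 : matCNorm (W₁ * w₁ - 1) ≤ ε := hw₁a.le
  -- ‖D Dᴴ - 1‖ ≤ 14 ε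
  have hDD : matCNorm (D * Ds - 1) ≤ 14 * ε := by
    rw [ring_id4 w₁ W₁ w₂ W₂ D Ds]
    have t1 : matCNorm ((D - w₁ * w₂) * Ds) ≤ ε * 5 :=
      matCNorm_mul_bound hDW.le hDsn hε.le
    have t2 : matCNorm ((w₁ * w₂) * (Ds - W₂ * W₁)) ≤ 4 * ε :=
      matCNorm_mul_bound hWn hDWs.le (by norm_num)
    have t3 : matCNorm (w₁ * (w₂ * W₂ - 1) * W₁) ≤ 2 * ε * 2 :=
      matCNorm_mul_bound (matCNorm_mul_bound hw₁n hw₂b.le (by norm_num)) hw₁sn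
        (by nlinarith)
    have t4 : matCNorm (w₁ * W₁ - 1) ≤ ε := hw₁b.le
    have s1 := matCNorm_add_bound t1 t2
    have s2 := matCNorm_add_bound s1 t3
    have s3 := matCNorm_add_bound s2 t4
    linarith
  have hcomm : P * D = D * P := diagOne_mul_dsum_comm u v
  have hDPD : matCNorm (D * P * Ds - P) ≤ 14 * ε := by
    rw [ring_id5 hcomm]
    have := matCNorm_mul_bound hPn hDD (by norm_num)
    linarith
  -- the two approximate projections
  set x : Matrix (Fin (n+m)) (Fin (n+m)) A := W₁ * P * w₁ - P with hx_def
  set y : Matrix (Fin (n+m)) (Fin (n+m)) A := w₂ * P * W₂ - P with hy_def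
  have hxy : matCNorm (x - y) ≤ 104 * ε := by
    rw [hx_def, hy_def, ring_id3 w₁ W₁ w₂ W₂ D Ds P]
    have hin1 : matCNorm (P - D * P * Ds) ≤ 14 * ε := by
      have hneg : P - D * P * Ds = -(D * P * Ds - P) := by abel
      rw [hneg, matCNorm_neg]; exact hDPD
    have hT1 : matCNorm (W₁ * (P - D * P * Ds) * w₁) ≤ 2 * (14 * ε) * 2 :=
      matCNorm_mul_bound (matCNorm_mul_bound hw₁sn hin1 (by norm_num))
        hw₁n (by nlinarith)
    have h1 : matCNorm ((D - w₁ * w₂) * P * Ds) ≤ ε * 1 * 5 :=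
      matCNorm_mul_bound (matCNorm_mul_bound hDW.le hPn hε.le) hDsn
        (by nlinarith)
    have h2 : matCNorm ((w₁ * w₂) * P * (Ds - W₂ * W₁)) ≤ 4 * 1 * ε :=
      matCNorm_mul_bound (matCNorm_mul_bound hWn hPn (by norm_num)) hDWs.le
        (by norm_num)
    have hT2in : matCNorm ((D - w₁ * w₂) * P * Ds + (w₁ * w₂) * P * (Ds - W₂ * W₁))
        ≤ 9 * ε := by
      have := matCNorm_add_bound h1 h2
      linarith
    have hT2 : matCNorm (W₁ * ((D - w₁ * w₂) * P * Ds
        + (w₁ * w₂) * P * (Ds - W₂ * W₁)) * w₁) ≤ 2 * (9 * ε) * 2 :=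
      matCNorm_mul_bound (matCNorm_mul_bound hw₁sn hT2in (by norm_num)) hw₁n
        (by nlinarith)
    have hT3a : matCNorm ((W₁ * w₁ - 1) * (w₂ * P * W₂) * (W₁ * w₁)) ≤ ε * 4 * 2 :=
      matCNorm_mul_bound (matCNorm_mul_bound haan1 hRn hε.le) haan
        (by nlinarith)
    have hT3b : matCNorm ((w₂ * P * W₂) * (W₁ * w₁ - 1)) ≤ 4 * ε :=
      matCNorm_mul_bound hRn haan1 (by norm_num)
    have s1 := matCNorm_add_bound hT1 hT2
    have s2 := matCNorm_add_bound hT3a hT3b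
    have s3 := matCNorm_add_bound s1 s2
    linarith
  -- memberships of x and y
  have hE3 : posSMul 3 E' = E' + E' + E' := rfl
  have hPe : ∀ (Eo : ℰ), ∀ i j, P i j ∈ Φ.F Eo := fun Eo => entry_diagOne_F Φ Eo
  have hW₁e : ∀ i j, W₁ i j ∈ Φ.F E' := entry_conjTranspose_F Φ hw₁e
  have hW₂e : ∀ i j, W₂ i j ∈ Φ.F E' := entry_conjTranspose_F Φ hw₂e
  have hxF : ∀ i j, x i j ∈ Φ.F (posSMul 3 E') := by
    rw [hE3]
    intro i j
    rw [hx_def, Matrix.sub_apply]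
    exact Submodule.sub_mem _
      (entry_mul_F Φ (entry_mul_F Φ hW₁e (hPe E')) hw₁e i j)
      (hPe _ i j)
  have hyF : ∀ i j, y i j ∈ Φ.F (posSMul 3 E') := by
    rw [hE3]
    intro i j
    rw [hy_def, Matrix.sub_apply]
    exact Submodule.sub_mem _
      (entry_mul_F Φ (entry_mul_F Φ hw₂e (hPe E')) hW₂e i j)
      (hPe _ i j)
  have hb₁s : ∀ i j, (W₁ - 1) i j ∈ mv.B₁ := by
    have h : W₁ - 1 = (w₁ - 1).conjTranspose := by
      rw [hW₁_def, Matrix.conjTranspose_sub, Matrix.conjTranspose_one]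
    rw [h]
    exact entry_conjTranspose_B hb₁
  have hb₂s : ∀ i j, (W₂ - 1) i j ∈ mv.B₂ := by
    have h : W₂ - 1 = (w₂ - 1).conjTranspose := by
      rw [hW₂_def, Matrix.conjTranspose_sub, Matrix.conjTranspose_one]
    rw [h]
    exact entry_conjTranspose_B hb₂
  have hxB : ∀ i j, x i j ∈ mv.B₁ := by
    intro i j
    rw [hx_def, ring_id1 W₁ w₁ P]
    rw [Matrix.add_apply, Matrix.add_apply]
    refine add_mem (add_mem ?_ ?_) ?_
    · exact entry_mul_B (entry_mul_diagOne_B hb₁s) hb₁ i j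
    · exact entry_mul_diagOne_B hb₁s i j
    · exact entry_diagOne_mul_B hb₁ i j
  have hyB : ∀ i j, y i j ∈ mv.B₂ := by
    intro i j
    rw [hy_def, ring_id1 w₂ W₂ P]
    rw [Matrix.add_apply, Matrix.add_apply]
    refine add_mem (add_mem ?_ ?_) ?_
    · exact entry_mul_B (entry_mul_diagOne_B hb₂) hb₂s i j
    · exact entry_mul_diagOne_B hb₂ i j
    · exact entry_diagOne_mul_B hb₂s i j
  -- apply the CIA property
  have hxylt : matCNorm (x - y) < 105 * ε := lt_of_le_of_lt hxy (by nlinarith)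
  obtain ⟨z, hz, hzx, hzy⟩ := mv.cia (posSMul 3 E') (105 * ε) (by positivity) (n + m) x y
    (fun i j => ⟨hxB i j, hxF i j⟩) (fun i j => ⟨hyB i j, hyF i j⟩) hxylt
  -- symmetrize z
  set zs : Matrix (Fin (n+m)) (Fin (n+m)) A := ((2:ℂ)⁻¹) • (z + z.conjTranspose) with hzs_def
  have hPsa : P.conjTranspose = P := diagOne_conjTranspose
  have hxsa : x.conjTranspose = x := by
    rw [hx_def, Matrix.conjTranspose_sub, Matrix.conjTranspose_mul, Matrix.conjTranspose_mul,
      hPsa, hW₁_def, Matrix.conjTranspose_conjTranspose, Matrix.mul_assoc]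
  have hysa : y.conjTranspose = y := by
    rw [hy_def, Matrix.conjTranspose_sub, Matrix.conjTranspose_mul, Matrix.conjTranspose_mul,
      hPsa, hW₂_def, Matrix.conjTranspose_conjTranspose, Matrix.mul_assoc]
  have hstarhalf : star ((2:ℂ)⁻¹) = ((2:ℂ)⁻¹) := by simp
  have hzssa : zs.conjTranspose = zs := by
    simp only [hzs_def, Matrix.conjTranspose_smul, Matrix.conjTranspose_add,
      Matrix.conjTranspose_conjTranspose, hstarhalf]
    rw [add_comm z.conjTranspose z]
  have hnormhalf : ‖((2:ℂ)⁻¹)‖ = 2⁻¹ := by norm_num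
  have hzsx : matCNorm (zs - x) < 105 * c * ε := by
    have hid : zs - x = ((2:ℂ)⁻¹) • ((z - x) + (z - x).conjTranspose) := by
      simp only [hzs_def, Matrix.conjTranspose_sub, hxsa]
      module
    have h1 : matCNorm ((z - x) + (z - x).conjTranspose)
        ≤ matCNorm (z - x) + matCNorm (z - x) := by
      have h := matCNorm_add_le (z - x) (z - x).conjTranspose
      rw [matCNorm_conjTranspose] at h
      linarith
    have h2 := matCNorm_smul_le ((2:ℂ)⁻¹) ((z - x) + (z - x).conjTranspose)
    rw [hnormhalf] at h2
    rw [hid]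
    linarith
  have hzsy : matCNorm (zs - y) < 105 * c * ε := by
    have hid : zs - y = ((2:ℂ)⁻¹) • ((z - y) + (z - y).conjTranspose) := by
      simp only [hzs_def, Matrix.conjTranspose_sub, hysa]
      module
    have h1 : matCNorm ((z - y) + (z - y).conjTranspose)
        ≤ matCNorm (z - y) + matCNorm (z - y) := by
      have h := matCNorm_add_le (z - y) (z - y).conjTranspose
      rw [matCNorm_conjTranspose] at h
      linarith
    have h2 := matCNorm_smul_le ((2:ℂ)⁻¹) ((z - y) + (z - y).conjTranspose)
    rw [hnormhalf] at h2
    rw [hid]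
    linarith
  -- entries of zs
  have hzsB₁ : ∀ i j, zs i j ∈ mv.B₁ := by
    intro i j
    rw [hzs_def, Matrix.smul_apply, Matrix.add_apply, Matrix.conjTranspose_apply]
    exact SMulMemClass.smul_mem _ (add_mem (hz i j).1 (star_mem (hz j i).1))
  have hzsB₂ : ∀ i j, zs i j ∈ mv.B₂ := by
    intro i j
    rw [hzs_def, Matrix.smul_apply, Matrix.add_apply, Matrix.conjTranspose_apply]
    exact SMulMemClass.smul_mem _ (add_mem (hz i j).2.1 (star_mem (hz j i).2.1))
  have hzsF : ∀ i j, zs i j ∈ Φ.F (posSMul 3 E') := by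
    intro i j
    rw [hzs_def, Matrix.smul_apply, Matrix.add_apply, Matrix.conjTranspose_apply]
    exact Submodule.smul_mem _ _
      (add_mem (hz i j).2.2 (Φ.star_mem _ _ (hz j i).2.2))
  -- the controlled projection
  set q : Matrix (Fin (n+m)) (Fin (n+m)) A := P + zs with hq_def
  have hqP : q - P = zs := by rw [hq_def]; abel
  have hidx : q - W₁ * P * w₁ = zs - x := by rw [hq_def, hx_def]; abel
  have hidy : q - w₂ * P * W₂ = zs - y := by rw [hq_def, hy_def]; abel
  have hcε : 105 * c * ε ≤ lam * ε := by
    have := mul_le_mul_of_nonneg_right h105 hε.le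
    linarith
  have hpn : matCNorm (W₁ * P * w₁) ≤ 4 := by
    have h1 : matCNorm (W₁ * P) ≤ 2 * 1 := matCNorm_mul_bound hw₁sn hPn (by norm_num)
    have := matCNorm_mul_bound h1 hw₁n (by norm_num)
    linarith
  have hqn : matCNorm q ≤ 5 := by
    have h : q = (q - W₁ * P * w₁) + W₁ * P * w₁ := by abel
    rw [h]
    have h2 := matCNorm_add_bound (le_of_lt (lt_of_lt_of_le hzsx hcε)) hpn
    rw [← hidx] at h2
    linarith [hlamε1, matCNorm_nonneg (q - W₁ * P * w₁)]
  have hppn : matCNorm ((W₁ * P * w₁) * (W₁ * P * w₁) - W₁ * P * w₁) ≤ 4 * ε := by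
    have hPP : P * P = P := diagOne_mul_diagOne
    rw [ring_id6 hPP]
    have b1 : matCNorm (W₁ * P) ≤ 2 * 1 := matCNorm_mul_bound hw₁sn hPn (by norm_num)
    have b2 : matCNorm (W₁ * P * (w₁ * W₁ - 1)) ≤ 2 * 1 * ε :=
      matCNorm_mul_bound b1 hw₁b.le (by norm_num)
    have b3 : matCNorm (W₁ * P * (w₁ * W₁ - 1) * P) ≤ 2 * 1 * ε * 1 :=
      matCNorm_mul_bound b2 hPn (by positivity)
    have b4 : matCNorm (W₁ * P * (w₁ * W₁ - 1) * P * w₁) ≤ 2 * 1 * ε * 1 * 2 :=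
      matCNorm_mul_bound b3 hw₁n (by positivity)
    linarith
  have hqq : matCNorm (q * q - q) < lam * ε := by
    rw [ring_id7 (W₁ * P * w₁) q]
    have hs : matCNorm (q - W₁ * P * w₁) < 105 * c * ε := by rw [hidx]; exact hzsx
    have e1 : matCNorm ((q - W₁ * P * w₁) * q) ≤ matCNorm (q - W₁ * P * w₁) * 5 :=
      matCNorm_mul_bound (le_refl _) hqn (matCNorm_nonneg _)
    have e2 : matCNorm ((W₁ * P * w₁) * (q - W₁ * P * w₁))
        ≤ 4 * matCNorm (q - W₁ * P * w₁) :=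
      matCNorm_mul_bound hpn (le_refl _) (by norm_num)
    have e4 : matCNorm (W₁ * P * w₁ - q) = matCNorm (q - W₁ * P * w₁) := by
      have h : W₁ * P * w₁ - q = -(q - W₁ * P * w₁) := by abel
      rw [h, matCNorm_neg]
    have s1 := matCNorm_add_bound e1 e2
    have s2 := matCNorm_add_bound s1 hppn
    have s3 := matCNorm_add_bound s2 (le_of_eq e4)
    have hpos : (0:ℝ) ≤ 10 * c + 1056 := by nlinarith
    nlinarith [mul_nonneg hpos hε.le, matCNorm_nonneg (q - W₁ * P * w₁)]
  refine ⟨q, ⟨?_, ?_, hqq⟩, ?_, ?_, ?_⟩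
  · intro i j
    rw [hq_def, Matrix.add_apply]
    exact Submodule.add_mem _ (hPe _ i j) (hzsF i j)
  · rw [Matrix.star_eq_conjTranspose, hq_def, Matrix.conjTranspose_add, hPsa, hzssa]
  · intro i j
    rw [hqP]
    exact ⟨hzsB₁ i j, hzsB₂ i j⟩
  · rw [hidx]
    exact lt_of_lt_of_le hzsx hcε
  · rw [hidy]
    exact lt_of_lt_of_le hzsy hcε
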